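/- arXiv:1808.01499 — 2 statements merged into one kernel-verified Lean document; each statement's English description precedes it below -/
import Mathlib

section
/- Let $N \geq 2$, constants $c_1 > c_2 > 0$, $\rho$, $\mu_1 = r + \lambda_1 - g$, $\mu_N = r + \lambda_N - g$ with $\rho > \mu_1 \geq \mu_N$ and $\frac{c_1}{c_2} > \frac{\rho - \mu_N}{\rho - \mu_1}$. Let $v(\cdot, j) : \mathbb{R}_+ \to [c_2, c_1]$ for $j = 1, \dots, N$, and let $q_{1j} \geq 0$ ($j \neq 1$), $q_{11} = -\sum_{j\neq 1} q_{1j}$, $q_{Nj} \geq 0$ ($j \neq N$), $q_{NN} = -\sum_{j\neq N} q_{Nj}$. If for some $x > 0$ both inequalities hold: $-(\rho - \mu_1)c_1 + \sum_{j\neq 1} q_{1j} v(x,j) + q_{11} c_1 + h'(x) \geq 0$ and $-(\rho - \mu_N)c_2 + \sum_{j\neq N} q_{Nj} v(x,j) + q_{NN} c_2 + h'(x) \leq 0$, then a contradiction follows; i.e., no such $x$ exists. -/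
/-- Core estimate in the proof of `a(N) < b(1)`: the two variational inequalities
cannot hold simultaneously at any `x > 0`. -/
theorem stmt10 {ι : Type*} [Fintype ι] [DecidableEq ι] (i1 iN : ι) (hne : i1 ≠ iN)
    (c1 c2 ρ r g lam1 lamN μ1 μN : ℝ) (h' : ℝ → ℝ)
    (hμ1 : μ1 = r + lam1 - g) (hμN : μN = r + lamN - g)
    (hc2 : 0 < c2) (hc12 : c2 < c1) (hρ : μ1 < ρ) (hμ : μN ≤ μ1)
    (hratio : c1 / c2 > (ρ - μN) / (ρ - μ1))
    (v : ℝ → ι → ℝ) (hv : ∀ x j, c2 ≤ v x j ∧ v x j ≤ c1)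
    (q1 qN : ι → ℝ)
    (hq1 : ∀ j, j ≠ i1 → 0 ≤ q1 j) (hqN : ∀ j, j ≠ iN → 0 ≤ qN j)
    (hq11 : q1 i1 = -∑ j ∈ Finset.univ.erase i1, q1 j)
    (hqNN : qN iN = -∑ j ∈ Finset.univ.erase iN, qN j)
    (x : ℝ) (hx : 0 < x)
    (hG : 0 ≤ -(ρ - μ1) * c1 + (∑ j ∈ Finset.univ.erase i1, q1 j * v x j)
        + q1 i1 * c1 + h' x)
    (hF : -(ρ - μN) * c2 + (∑ j ∈ Finset.univ.erase iN, qN j * v x j)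
        + qN iN * c2 + h' x ≤ 0) :
    False := by
  have h1 : ∑ j ∈ Finset.univ.erase i1, q1 j * v x j
      ≤ ∑ j ∈ Finset.univ.erase i1, q1 j * c1 :=
    Finset.sum_le_sum fun j hj =>
      mul_le_mul_of_nonneg_left (hv x j).2 (hq1 j (Finset.ne_of_mem_erase hj))
  have h2 : ∑ j ∈ Finset.univ.erase iN, qN j * c2
      ≤ ∑ j ∈ Finset.univ.erase iN, qN j * v x j :=
    Finset.sum_le_sum fun j hj =>
      mul_le_mul_of_nonneg_left (hv x j).1 (hqN j (Finset.ne_of_mem_erase hj))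
  rw [← Finset.sum_mul] at h1 h2
  have hkey : (ρ - μN) * c2 < c1 * (ρ - μ1) := by
    have := (div_lt_div_iff₀ (by linarith) hc2).mp hratio
    linarith
  nlinarith [hG, hF, h1, h2]
end

section
/- Let $\Phi_1(\beta) = \frac{1}{2}\sigma^2\beta^2 + (\mu_1 + \frac{1}{2}\sigma^2)\beta - (\rho + q_1 - \mu_1)$ and $\Phi_2(\beta) = \frac{1}{2}\sigma^2\beta^2 + (\mu_2 + \frac{1}{2}\sigma^2)\beta - (\rho + q_2 - \mu_2)$ with $\sigma, q_1, q_2 > 0$, $\mu_1, \mu_2 \in \mathbb{R}$, and $\rho + q_i - \mu_i > q_i > 0$ for $i = 1,2$ (i.e., $\rho > \mu_i$). Then the quartic equation $\Phi_1(\beta)\Phi_2(\beta) = q_1 q_2$ has at least two positive real roots and at least two negative real roots, in total four distinct real roots $\beta_4 < \beta_3 < 0 < \beta_2 < \beta_1$. -/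
open Filter Set

private lemma quad_top (a b c : ℝ) (ha : 0 < a) :
    Tendsto (fun β : ℝ => a * β ^ 2 + b * β + c) atTop atTop := by
  have h1 : Tendsto (fun β : ℝ => a * β + b) atTop atTop :=
    tendsto_atTop_add_const_right _ b (tendsto_id.const_mul_atTop ha)
  have h2 : Tendsto (fun β : ℝ => β * (a * β + b)) atTop atTop :=
    tendsto_id.atTop_mul_atTop₀ h1
  have h3 := tendsto_atTop_add_const_right atTop c h2
  exact h3.congr (fun β => by ring)

private lemma quad_bot (a b c : ℝ) (ha : 0 < a) :
    Tendsto (fun β : ℝ => a * β ^ 2 + b * β + c) atBot atTop := by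
  have h1 : Tendsto (fun β : ℝ => a * β + b) atBot atBot :=
    tendsto_atBot_add_const_right _ b (tendsto_id.const_mul_atBot ha)
  have h2 : Tendsto (fun β : ℝ => β * (a * β + b)) atBot atTop :=
    tendsto_id.atBot_mul_atBot₀ h1
  have h3 := tendsto_atTop_add_const_right atBot c h2
  exact h3.congr (fun β => by ring)

/-- The quartic characteristic equation `Φ₁(β)Φ₂(β) = q₁q₂` of the coupled two-regime
ODE system has four distinct real roots `β₄ < β₃ < 0 < β₂ < β₁`. -/
theorem stmt17 (σ q1 q2 μ1 μ2 ρ : ℝ) (hσ : 0 < σ) (hq1 : 0 < q1) (hq2 : 0 < q2)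
    (hρ1 : μ1 < ρ) (hρ2 : μ2 < ρ)
    (Φ1 Φ2 : ℝ → ℝ)
    (hΦ1 : ∀ β, Φ1 β = σ^2/2 * β^2 + (μ1 + σ^2/2) * β - (ρ + q1 - μ1))
    (hΦ2 : ∀ β, Φ2 β = σ^2/2 * β^2 + (μ2 + σ^2/2) * β - (ρ + q2 - μ2)) :
    ∃ β1 β2 β3 β4 : ℝ, β4 < β3 ∧ β3 < 0 ∧ 0 < β2 ∧ β2 < β1 ∧
      Φ1 β1 * Φ2 β1 = q1 * q2 ∧ Φ1 β2 * Φ2 β2 = q1 * q2 ∧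
      Φ1 β3 * Φ2 β3 = q1 * q2 ∧ Φ1 β4 * Φ2 β4 = q1 * q2 := by
  have ha : (0:ℝ) < σ ^ 2 / 2 := by positivity
  have hΦ1f : Φ1 = fun β : ℝ => σ^2/2 * β^2 + (μ1 + σ^2/2) * β + (-(ρ + q1 - μ1)) :=
    funext fun β => by rw [hΦ1]; ring
  have hΦ2f : Φ2 = fun β : ℝ => σ^2/2 * β^2 + (μ2 + σ^2/2) * β + (-(ρ + q2 - μ2)) :=
    funext fun β => by rw [hΦ2]; ring
  have cont1 : Continuous Φ1 := by rw [hΦ1f]; continuity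
  have cont2 : Continuous Φ2 := by rw [hΦ2f]; continuity
  set F : ℝ → ℝ := fun β => Φ1 β * Φ2 β with hF
  have contF : Continuous F := cont1.mul cont2
  have top1 : Tendsto Φ1 atTop atTop := hΦ1f ▸ quad_top _ _ _ ha
  have top2 : Tendsto Φ2 atTop atTop := hΦ2f ▸ quad_top _ _ _ ha
  have bot1 : Tendsto Φ1 atBot atTop := hΦ1f ▸ quad_bot _ _ _ ha
  have bot2 : Tendsto Φ2 atBot atTop := hΦ2f ▸ quad_bot _ _ _ ha
  have topF : Tendsto F atTop atTop := top1.atTop_mul_atTop₀ top2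
  have botF : Tendsto F atBot atTop := bot1.atTop_mul_atTop₀ bot2
  have hq : (0:ℝ) < q1 * q2 := by positivity
  have hΦ10 : Φ1 0 < 0 := by rw [hΦ1]; nlinarith
  have hF0 : q1 * q2 < F 0 := by
    simp only [hF, hΦ1, hΦ2]; nlinarith
  -- positive root b of Φ1
  obtain ⟨M, hM1, hM0⟩ := ((top1.eventually_ge_atTop 1).and (eventually_gt_atTop 0)).exists
  obtain ⟨b, hb, hΦ1b⟩ : ∃ b ∈ Ioo (0:ℝ) M, Φ1 b = 0 := by
    have h := intermediate_value_Ioo hM0.le cont1.continuousOn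
    have h0 : (0:ℝ) ∈ Ioo (Φ1 0) (Φ1 M) := ⟨hΦ10, by linarith⟩
    obtain ⟨b, hb, hfb⟩ := h h0
    exact ⟨b, hb, hfb⟩
  have hFb : F b = 0 := by simp [hF, hΦ1b]
  -- β2 ∈ (0, b)
  obtain ⟨β2, hβ2, hFβ2⟩ : ∃ x ∈ Ioo (0:ℝ) b, F x = q1 * q2 := by
    have h := intermediate_value_Ioo' hb.1.le contF.continuousOn
    obtain ⟨x, hx, hfx⟩ := h (⟨by rw [hFb]; exact hq, hF0⟩ : q1 * q2 ∈ Ioo (F b) (F 0))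
    exact ⟨x, hx, hfx⟩
  -- β1 ∈ (b, M2)
  obtain ⟨M2, hM2q, hM2b⟩ := ((topF.eventually_gt_atTop (q1 * q2)).and (eventually_gt_atTop b)).exists
  obtain ⟨β1, hβ1, hFβ1⟩ : ∃ x ∈ Ioo b M2, F x = q1 * q2 := by
    have h := intermediate_value_Ioo hM2b.le contF.continuousOn
    obtain ⟨x, hx, hfx⟩ := h (⟨by rw [hFb]; exact hq, hM2q⟩ : q1 * q2 ∈ Ioo (F b) (F M2))
    exact ⟨x, hx, hfx⟩
  -- negative root a of Φ1
  obtain ⟨N, hN1, hN0⟩ := ((bot1.eventually_ge_atTop 1).and (eventually_lt_atBot 0)).exists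
  obtain ⟨a, haI, hΦ1a⟩ : ∃ a ∈ Ioo N (0:ℝ), Φ1 a = 0 := by
    have h := intermediate_value_Ioo' hN0.le cont1.continuousOn
    obtain ⟨x, hx, hfx⟩ := h (⟨hΦ10, by linarith⟩ : (0:ℝ) ∈ Ioo (Φ1 0) (Φ1 N))
    exact ⟨x, hx, hfx⟩
  have hFa : F a = 0 := by simp [hF, hΦ1a]
  -- β3 ∈ (a, 0)
  obtain ⟨β3, hβ3, hFβ3⟩ : ∃ x ∈ Ioo a (0:ℝ), F x = q1 * q2 := by
    have h := intermediate_value_Ioo haI.2.le contF.continuousOn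
    obtain ⟨x, hx, hfx⟩ := h (⟨by rw [hFa]; exact hq, hF0⟩ : q1 * q2 ∈ Ioo (F a) (F 0))
    exact ⟨x, hx, hfx⟩
  -- β4 ∈ (N2, a)
  obtain ⟨N2, hN2q, hN2a⟩ := ((botF.eventually_gt_atTop (q1 * q2)).and (eventually_lt_atBot a)).exists
  obtain ⟨β4, hβ4, hFβ4⟩ : ∃ x ∈ Ioo N2 a, F x = q1 * q2 := by
    have h := intermediate_value_Ioo' hN2a.le contF.continuousOn
    obtain ⟨x, hx, hfx⟩ := h (⟨by rw [hFa]; exact hq, hN2q⟩ : q1 * q2 ∈ Ioo (F a) (F N2))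
    exact ⟨x, hx, hfx⟩
  exact ⟨β1, β2, β3, β4, lt_trans hβ4.2 hβ3.1, hβ3.2, hβ2.1, lt_trans hβ2.2 hβ1.1,
    hFβ1, hFβ2, hFβ3, hFβ4⟩
end
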